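/- Let k > 2 and let s > k^k. Then no k-uniform [0,s]-almost intersecting hypergraph with at least (s+1)·(2k-2 choose k-1) edges contains k pairwise disjoint edges. -/

import Mathlib

/-- Let `k > 2` and `s > k^k`. Then no `k`-uniform `[0,s]`-almost
intersecting hypergraph with at least `(s+1) * (2k-2 choose k-1)` edges contains `k`
pairwise disjoint edges. -/
theorem stmt_6 {α : Type*} [DecidableEq α] (k s : ℕ) (hk : 2 < k) (hs : k ^ k < s)
    (F : Finset (Finset α))
    (huniform : ∀ A ∈ F, A.card = k)
    (hai : ∀ A ∈ F, (F.filter fun B => Disjoint A B).card ≤ s)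
    (hcard : (s + 1) * Nat.choose (2 * k - 2) (k - 1) ≤ F.card) :
    ¬ ∃ G : Finset (Finset α), G ⊆ F ∧ G.card = k ∧
      ∀ X ∈ G, ∀ Y ∈ G, X ≠ Y → Disjoint X Y := by
  classical
  rintro ⟨G, hGF, hGcard, hGdisj⟩
  have hGk : ∀ A ∈ G, A.card = k := fun A hA => huniform A (hGF hA)
  have hGne : G.Nonempty := Finset.card_pos.mp (by omega)
  obtain ⟨A0, hA0⟩ := hGne
  have hα : Nonempty α := by
    have h1 : A0.card = k := hGk A0 hA0
    have h2 : A0.Nonempty := Finset.card_pos.mp (by omega)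
    exact ⟨h2.choose⟩
  set D := F.filter (fun B => ∃ A ∈ G, Disjoint A B) with hDdef
  set I := F.filter (fun B => ∀ A ∈ G, ¬ Disjoint A B) with hIdef
  have hsplit : F.card ≤ D.card + I.card := by
    have hsub : F ⊆ D ∪ I := by
      intro B hB
      by_cases h : ∃ A ∈ G, Disjoint A B
      · exact Finset.mem_union_left _ (Finset.mem_filter.mpr ⟨hB, h⟩)
      · push_neg at h
        exact Finset.mem_union_right _ (Finset.mem_filter.mpr ⟨hB, h⟩)
    exact le_trans (Finset.card_le_card hsub) (Finset.card_union_le _ _)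
  have hD : D.card ≤ k * s := by
    have hsub : D ⊆ G.biUnion (fun A => F.filter fun B => Disjoint A B) := by
      intro B hB
      rw [Finset.mem_biUnion]
      obtain ⟨hBF, A, hA, hdisj⟩ := Finset.mem_filter.mp hB
      exact ⟨A, hA, Finset.mem_filter.mpr ⟨hBF, hdisj⟩⟩
    calc D.card ≤ (G.biUnion (fun A => F.filter fun B => Disjoint A B)).card :=
          Finset.card_le_card hsub
      _ ≤ ∑ A ∈ G, (F.filter fun B => Disjoint A B).card := Finset.card_biUnion_le
      _ ≤ ∑ _A ∈ G, s := Finset.sum_le_sum fun A hA => hai A (hGF hA)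
      _ = k * s := by rw [Finset.sum_const, hGcard, smul_eq_mul]
  -- key structural facts for B ∈ I
  have hkey : ∀ B ∈ I, (∀ A ∈ G, (A ∩ B).card = 1) ∧ B = G.biUnion (fun A => A ∩ B) := by
    intro B hB
    obtain ⟨hBF, hmeet⟩ := Finset.mem_filter.mp hB
    have hBk : B.card = k := huniform B hBF
    have hge : ∀ A ∈ G, 1 ≤ (A ∩ B).card := by
      intro A hA
      have : (A ∩ B).Nonempty := Finset.not_disjoint_iff_nonempty_inter.mp (hmeet A hA)
      exact Finset.card_pos.mpr this
    have hpd : (G : Set (Finset α)).PairwiseDisjoint (fun A => A ∩ B) := by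
      intro X hX Y hY hXY
      exact Finset.disjoint_left.mpr fun a ha ha' =>
        Finset.disjoint_left.mp (hGdisj X hX Y hY hXY)
          (Finset.mem_inter.mp ha).1 (Finset.mem_inter.mp ha').1
    have hbsub : G.biUnion (fun A => A ∩ B) ⊆ B := by
      intro a ha
      obtain ⟨A, _, haA⟩ := Finset.mem_biUnion.mp ha
      exact (Finset.mem_inter.mp haA).2
    have hcardbU : (G.biUnion (fun A => A ∩ B)).card = ∑ A ∈ G, (A ∩ B).card :=
      Finset.card_biUnion fun X hX Y hY hXY => hpd hX hY hXY
    have hsum_le : ∑ A ∈ G, (A ∩ B).card ≤ k := by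
      rw [← hcardbU, ← hBk]; exact Finset.card_le_card hbsub
    have hsum_ge : k ≤ ∑ A ∈ G, (A ∩ B).card := by
      calc k = ∑ _A ∈ G, 1 := by rw [Finset.sum_const, hGcard, smul_eq_mul, mul_one]
        _ ≤ ∑ A ∈ G, (A ∩ B).card := Finset.sum_le_sum hge
    have hone : ∀ A ∈ G, (A ∩ B).card = 1 := by
      intro A hA
      by_contra h
      have h2 : 2 ≤ (A ∩ B).card := by have := hge A hA; omega
      have herase : ∑ A' ∈ G.erase A, 1 ≤ ∑ A' ∈ G.erase A, (A' ∩ B).card :=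
        Finset.sum_le_sum fun X hX => hge X (Finset.mem_of_mem_erase hX)
      rw [Finset.sum_const, smul_eq_mul, mul_one, Finset.card_erase_of_mem hA, hGcard]
        at herase
      have hsume : (A ∩ B).card + ∑ A' ∈ G.erase A, (A' ∩ B).card
          = ∑ A' ∈ G, (A' ∩ B).card :=
        Finset.add_sum_erase G (fun A' => (A' ∩ B).card) hA
      omega
    refine ⟨hone, ?_⟩
    have : (G.biUnion (fun A => A ∩ B)).card = k := by
      rw [hcardbU]
      calc ∑ A ∈ G, (A ∩ B).card = ∑ _A ∈ G, 1 := Finset.sum_congr rfl hone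
        _ = k := by rw [Finset.sum_const, hGcard, smul_eq_mul, mul_one]
    exact (Finset.eq_of_subset_of_card_le hbsub (by omega)).symm
  have hI : I.card ≤ k ^ k := by
    have hpicard : (G.pi (fun A => A)).card = k ^ k := by
      rw [Finset.card_pi]
      calc ∏ A ∈ G, A.card = ∏ _A ∈ G, k := Finset.prod_congr rfl hGk
        _ = k ^ k := by rw [Finset.prod_const, hGcard]
    rw [← hpicard]
    set f : Finset α → (∀ A ∈ G, α) := fun B A _ =>
      if h : (A ∩ B).Nonempty then h.choose else hα.some with hfdef
    have hmemchoose : ∀ B ∈ I, ∀ A (hA : A ∈ G), f B A hA ∈ A ∩ B := by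
      intro B hB A hA
      have h1 : (A ∩ B).card = 1 := (hkey B hB).1 A hA
      have hne : (A ∩ B).Nonempty := Finset.card_pos.mp (by omega)
      simp only [hfdef, dif_pos hne]
      exact hne.choose_spec
    have hsingleton : ∀ B ∈ I, ∀ A (hA : A ∈ G), A ∩ B = {f B A hA} := by
      intro B hB A hA
      have h1 : (A ∩ B).card = 1 := (hkey B hB).1 A hA
      obtain ⟨a, ha⟩ := Finset.card_eq_one.mp h1
      have := hmemchoose B hB A hA
      rw [ha] at this ⊢
      rw [Finset.mem_singleton.mp this]
    apply Finset.card_le_card_of_injOn f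
    · intro B hB
      rw [Finset.mem_coe, Finset.mem_pi]
      intro A hA
      exact (Finset.mem_inter.mp (hmemchoose B hB A hA)).1
    · intro B hB B' hB' hf
      have hBmem : B ∈ I := hB
      have hB'mem : B' ∈ I := hB'
      have heq : ∀ A ∈ G, A ∩ B = A ∩ B' := by
        intro A hA
        rw [hsingleton B hBmem A hA, hsingleton B' hB'mem A hA]
        have : f B A hA = f B' A hA := by
          exact congrFun (congrFun hf A) hA
        rw [this]
      rw [(hkey B hBmem).2, (hkey B' hB'mem).2]
      exact Finset.biUnion_congr rfl heq
  -- final arithmetic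
  have hC : k + 1 ≤ Nat.choose (2 * k - 2) (k - 1) := by
    have h1 : 2 * (k - 1) = 2 * k - 2 := by omega
    have h2 : Nat.choose (2 * (k - 1)) 1 ≤ Nat.choose (2 * (k - 1)) ((2 * (k - 1)) / 2) :=
      Nat.choose_le_middle 1 (2 * (k - 1))
    have h3 : (2 * (k - 1)) / 2 = k - 1 := by omega
    rw [h3, Nat.choose_one_right] at h2
    rw [← h1]
    omega
  have hbig : (s + 1) * (k + 1) ≤ (s + 1) * Nat.choose (2 * k - 2) (k - 1) :=
    Nat.mul_le_mul_left _ hC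
  nlinarith [hsplit, hD, hI, hcard, hbig, hs, hk]
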